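/- Let G be a finite commutative group with |G| = q, and let A₁, A₂ ⊆ G be standard sets. Then δ̄(A₁ ∩ A₂) ≤ q · δ̄(A₁) · δ̄(A₂); equivalently, Δ̄(A₁ ∩ A₂) ≥ Δ̄(A₁) · Δ̄(A₂) / q. -/
import Mathlib


open scoped Pointwise ComplexOrder

noncomputable section

def IsStandard {G : Type*} [AddCommGroup G] (A : Set G) : Prop :=
  A = -A ∧ (0 : G) ∈ A

def Delta {G : Type*} [AddCommGroup G] (A : Set G) : ℕ :=
  sSup {n | ∃ B : Finset G, ((B : Set G) - (B : Set G)) ∩ A = {0} ∧ B.card = n}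

def DeltaBar {G : Type*} [AddCommGroup G] (A : Set G) : ℕ :=
  sSup {n | ∃ B : Finset G, ((B : Set G) - (B : Set G)) ⊆ A ∧ B.card = n}

def deltaL {G : Type*} [AddCommGroup G] [Fintype G] (A : Set G) : ℝ :=
  (Delta A : ℝ) / (Fintype.card G : ℝ)

def deltaU {G : Type*} [AddCommGroup G] (A : Set G) : ℝ :=
  1 / (DeltaBar A : ℝ)

def ftrans {G : Type*} [AddCommGroup G] [Fintype G] (f : G → ℝ) (γ : AddChar G Circle) : ℂ :=
  ∑ x, (γ x : ℂ) * (f x : ℂ)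

def PosFT {G : Type*} [AddCommGroup G] [Fintype G] (f : G → ℝ) : Prop :=
  ∀ γ : AddChar G Circle, 0 ≤ ftrans f γ

def lamSet {G : Type*} [AddCommGroup G] [Fintype G] (S : Set (G → ℝ)) : Set ℝ :=
  {r | ∃ f ∈ S, PosFT f ∧ (∑ x, f x) ≠ 0 ∧ r = f 0 / ∑ x, f x}

def lam {G : Type*} [AddCommGroup G] [Fintype G] (A : Set G) : ℝ :=
  sInf (lamSet {f | f ≠ 0 ∧ ∀ x ∉ A, f x = 0})

def lamMinus {G : Type*} [AddCommGroup G] [Fintype G] (A : Set G) : ℝ :=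
  sInf (lamSet {f | f ≠ 0 ∧ ∀ x ∉ A, f x ≤ 0})

def lamPlus {G : Type*} [AddCommGroup G] [Fintype G] (A : Set G) : ℝ :=
  sInf (lamSet {f | f ≠ 0 ∧ (∀ x ∉ A, f x = 0) ∧ ∀ x ∈ A, 0 ≤ f x})

def lamPM {G : Type*} [AddCommGroup G] [Fintype G] (A : Set G) : ℝ :=
  sInf (lamSet {f | f ≠ 0 ∧ (∀ x ∉ A, f x ≤ 0) ∧ ∀ x ∈ A, 0 ≤ f x})


lemma deltaBar_bdd {G : Type*} [AddCommGroup G] [Fintype G] (A : Set G) :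
    BddAbove {n | ∃ B : Finset G, ((B : Set G) - (B : Set G)) ⊆ A ∧ B.card = n} :=
  ⟨Fintype.card G, by rintro n ⟨B, _, rfl⟩; exact B.card_le_univ⟩

lemma one_mem_deltaSet {G : Type*} [AddCommGroup G] {A : Set G} (h0 : (0 : G) ∈ A) :
    1 ∈ {n | ∃ B : Finset G, ((B : Set G) - (B : Set G)) ⊆ A ∧ B.card = n} := by
  refine ⟨{0}, ?_, by simp⟩
  intro x hx
  simp only [Finset.coe_singleton, Set.singleton_sub_singleton, sub_zero,
    Set.mem_singleton_iff] at hx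
  simpa [hx] using h0

theorem stmt10 {G : Type*} [AddCommGroup G] [Fintype G]
    (A₁ A₂ : Set G) (h₁ : IsStandard A₁) (h₂ : IsStandard A₂) :
    deltaU (A₁ ∩ A₂) ≤ (Fintype.card G : ℝ) * deltaU A₁ * deltaU A₂ ∧
    (DeltaBar A₁ : ℝ) * (DeltaBar A₂ : ℝ) / (Fintype.card G : ℝ) ≤ (DeltaBar (A₁ ∩ A₂) : ℝ) := by
  classical
  have hq : (0:ℝ) < (Fintype.card G : ℝ) := by
    exact_mod_cast Fintype.card_pos
  obtain ⟨B₁, hB₁, hc₁⟩ : DeltaBar A₁ ∈ {n | ∃ B : Finset G, ((B : Set G) - (B : Set G)) ⊆ A₁ ∧ B.card = n} :=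
    Nat.sSup_mem ⟨1, one_mem_deltaSet h₁.2⟩ (deltaBar_bdd A₁)
  obtain ⟨B₂, hB₂, hc₂⟩ : DeltaBar A₂ ∈ {n | ∃ B : Finset G, ((B : Set G) - (B : Set G)) ⊆ A₂ ∧ B.card = n} :=
    Nat.sSup_mem ⟨1, one_mem_deltaSet h₂.2⟩ (deltaBar_bdd A₂)
  have hsum : ∑ g : G, (B₁.filter (fun b => b - g ∈ B₂)).card = B₁.card * B₂.card := by
    simp_rw [Finset.card_filter]
    rw [Finset.sum_comm]
    have hpt : ∀ b ∈ B₁, (∑ g : G, if b - g ∈ B₂ then 1 else 0) = B₂.card := by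
      intro b _
      rw [← Finset.card_filter]
      have himg : Finset.univ.filter (fun g => b - g ∈ B₂) = B₂.image (fun c => b - c) := by
        ext g
        simp only [Finset.mem_filter, Finset.mem_univ, true_and, Finset.mem_image]
        constructor
        · intro h; exact ⟨b - g, h, by abel⟩
        · rintro ⟨c, hc, rfl⟩; simpa using hc
      rw [himg, Finset.card_image_of_injective _ (fun x y h => sub_right_injective h)]
    rw [Finset.sum_congr rfl hpt, Finset.sum_const, smul_eq_mul]
  have hpig : ∃ g : G, B₁.card * B₂.card ≤ Fintype.card G * (B₁.filter (fun b => b - g ∈ B₂)).card := by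
    have h := Finset.exists_le_of_sum_le (s := (Finset.univ : Finset G))
      (f := fun _ => B₁.card * B₂.card)
      (g := fun g => Fintype.card G * (B₁.filter (fun b => b - g ∈ B₂)).card)
      Finset.univ_nonempty ?_
    · obtain ⟨g, _, hg⟩ := h; exact ⟨g, hg⟩
    · rw [Finset.sum_const, ← Finset.mul_sum, hsum, smul_eq_mul, Finset.card_univ]
  obtain ⟨g, hg⟩ := hpig
  set Bg := B₁.filter (fun b => b - g ∈ B₂) with hBg
  have hBgsub : ((Bg : Set G) - (Bg : Set G)) ⊆ A₁ ∩ A₂ := by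
    rintro x ⟨a, ha, b, hb, rfl⟩
    simp only [hBg, Finset.coe_filter, Set.mem_setOf_eq] at ha hb
    constructor
    · exact hB₁ ⟨a, ha.1, b, hb.1, rfl⟩
    · have := hB₂ ⟨a - g, ha.2, b - g, hb.2, rfl⟩
      simpa [sub_sub_sub_cancel_right] using this
  have hle : Bg.card ≤ DeltaBar (A₁ ∩ A₂) :=
    le_csSup (deltaBar_bdd _) ⟨Bg, hBgsub, rfl⟩
  have key : (DeltaBar A₁ : ℝ) * (DeltaBar A₂ : ℝ) ≤ (Fintype.card G : ℝ) * (DeltaBar (A₁ ∩ A₂) : ℝ) := by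
    rw [← hc₁, ← hc₂]
    calc (B₁.card : ℝ) * B₂.card ≤ (Fintype.card G : ℝ) * Bg.card := by exact_mod_cast hg
    _ ≤ (Fintype.card G : ℝ) * (DeltaBar (A₁ ∩ A₂) : ℝ) :=
        mul_le_mul_of_nonneg_left (by exact_mod_cast hle) hq.le
  have hd₁ : (0:ℝ) < (DeltaBar A₁ : ℝ) := by
    have : 1 ≤ DeltaBar A₁ := le_csSup (deltaBar_bdd A₁) (one_mem_deltaSet h₁.2)
    exact_mod_cast this
  have hd₂ : (0:ℝ) < (DeltaBar A₂ : ℝ) := by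
    have : 1 ≤ DeltaBar A₂ := le_csSup (deltaBar_bdd A₂) (one_mem_deltaSet h₂.2)
    exact_mod_cast this
  have hd₁₂ : (0:ℝ) < (DeltaBar (A₁ ∩ A₂) : ℝ) := by
    have : 1 ≤ DeltaBar (A₁ ∩ A₂) :=
      le_csSup (deltaBar_bdd _) (one_mem_deltaSet ⟨h₁.2, h₂.2⟩)
    exact_mod_cast this
  constructor
  · unfold deltaU
    rw [div_le_iff₀ hd₁₂]
    have h2 : (Fintype.card G : ℝ) * (1 / (DeltaBar A₁ : ℝ)) * (1 / (DeltaBar A₂ : ℝ)) * (DeltaBar (A₁ ∩ A₂) : ℝ)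
        = ((Fintype.card G : ℝ) * (DeltaBar (A₁ ∩ A₂) : ℝ)) / ((DeltaBar A₁ : ℝ) * (DeltaBar A₂ : ℝ)) := by
      field_simp
    rw [h2, le_div_iff₀ (by positivity)]
    linarith [key]
  · rw [div_le_iff₀ hq]
    linarith [key]
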